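/- Let D be a double Boolean algebra, T the topology on F_pr(D) having {F_x : x ∈ D} as a subbase of closed sets, and J the topology on I_pr(D) having {I_x : x ∈ D} as a subbase of closed sets. Then (F_pr(D), T) and (I_pr(D), J) are compact and totally disconnected topological spaces; hence both are Hausdorff. -/

import Mathlib

universe u v

/-- A double Boolean algebra (dBa). -/
structure DBA (D : Type u) where
  sup : D → D → D
  inf : D → D → D
  neg : D → D
  dneg : D → D
  top : D
  bot : D
  ax1a : ∀ x y, inf (inf x x) y = inf x y
  ax2a : ∀ x y, inf x y = inf y x
  ax3a : ∀ x y z, inf x (inf y z) = inf (inf x y) z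
  ax4a : ∀ x, neg (inf x x) = neg x
  ax5a : ∀ x y, inf x (sup x y) = inf x x
  ax6a : ∀ x y z, inf x (neg (inf (neg y) (neg z))) =
      neg (inf (neg (inf x y)) (neg (inf x z)))
  ax7a : ∀ x y, inf x (neg (inf (neg x) (neg y))) = inf x x
  ax8a : ∀ x y, neg (neg (inf x y)) = inf x y
  ax9a : ∀ x, inf x (neg x) = bot
  ax10a : neg bot = inf top top
  ax11a : neg top = bot
  ax1b : ∀ x y, sup (sup x x) y = sup x y
  ax2b : ∀ x y, sup x y = sup y x
  ax3b : ∀ x y z, sup x (sup y z) = sup (sup x y) z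
  ax4b : ∀ x, dneg (sup x x) = dneg x
  ax5b : ∀ x y, sup x (inf x y) = sup x x
  ax6b : ∀ x y z, sup x (dneg (sup (dneg y) (dneg z))) =
      dneg (sup (dneg (sup x y)) (dneg (sup x z)))
  ax7b : ∀ x y, sup x (dneg (sup (dneg x) (dneg y))) = sup x x
  ax8b : ∀ x y, dneg (dneg (sup x y)) = sup x y
  ax9b : ∀ x, sup x (dneg x) = top
  ax10b : dneg top = sup bot bot
  ax11b : dneg bot = top
  ax12 : ∀ x, sup (inf x x) (inf x x) = inf (sup x x) (sup x x)

namespace DBA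

variable {D : Type u} {E : Type v}

/-- x ∨ y := ¬(¬x ⊓ ¬y) -/
def vee (A : DBA D) (x y : D) : D := A.neg (A.inf (A.neg x) (A.neg y))

/-- x ∧ y := ⌟(⌟x ⊔ ⌟y) -/
def wedge (A : DBA D) (x y : D) : D := A.dneg (A.sup (A.dneg x) (A.dneg y))

/-- The quasi-order ⊑. -/
def le (A : DBA D) (x y : D) : Prop := A.inf x y = A.inf x x ∧ A.sup x y = A.sup y y

def IsFilter (A : DBA D) (F : Set D) : Prop :=
  (∀ x ∈ F, ∀ y ∈ F, A.inf x y ∈ F) ∧ ∀ x ∈ F, ∀ z, A.le x z → z ∈ F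

def IsIdeal (A : DBA D) (I : Set D) : Prop :=
  (∀ x ∈ I, ∀ y ∈ I, A.sup x y ∈ I) ∧ ∀ x ∈ I, ∀ z, A.le z x → z ∈ I

def IsPrimaryFilter (A : DBA D) (F : Set D) : Prop :=
  A.IsFilter F ∧ F ≠ Set.univ ∧ ∀ x, x ∈ F ∨ A.neg x ∈ F

def IsPrimaryIdeal (A : DBA D) (I : Set D) : Prop :=
  A.IsIdeal I ∧ I ≠ Set.univ ∧ ∀ x, x ∈ I ∨ A.dneg x ∈ I

def Pure (A : DBA D) : Prop := ∀ x, A.inf x x = x ∨ A.sup x x = x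

def Contextual (A : DBA D) : Prop := ∀ x y, A.le x y → A.le y x → x = y

def FullyContextual (A : DBA D) : Prop :=
  A.Contextual ∧
    ∀ y x, A.inf y y = y → A.sup x x = x → A.sup y y = A.inf x x →
      ∃! z, A.inf z z = y ∧ A.sup z z = x

/-- D_p = D_⊓ ∪ D_⊔ -/
def Dp (A : DBA D) : Set D := {x | A.inf x x = x} ∪ {x | A.sup x x = x}

def IsHom (A : DBA D) (B : DBA E) (h : D → E) : Prop :=
  (∀ x y, h (A.inf x y) = B.inf (h x) (h y)) ∧
  (∀ x y, h (A.sup x y) = B.sup (h x) (h y)) ∧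
  (∀ x, h (A.neg x) = B.neg (h x)) ∧
  (∀ x, h (A.dneg x) = B.dneg (h x)) ∧
  h A.top = B.top ∧ h A.bot = B.bot

def IsHomOn (A : DBA D) (B : DBA E) (S : Set D) (h : D → E) : Prop :=
  (∀ x ∈ S, ∀ y ∈ S, h (A.inf x y) = B.inf (h x) (h y)) ∧
  (∀ x ∈ S, ∀ y ∈ S, h (A.sup x y) = B.sup (h x) (h y)) ∧
  (∀ x ∈ S, h (A.neg x) = B.neg (h x)) ∧
  (∀ x ∈ S, h (A.dneg x) = B.dneg (h x)) ∧
  h A.top = B.top ∧ h A.bot = B.bot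

end DBA

section FCA

variable {G : Type u} {M : Type v}

/-- B^◇ -/
def odia (R : G → M → Prop) (B : Set M) : Set G := {g | ∃ m ∈ B, R g m}
/-- B^□ -/
def obox (R : G → M → Prop) (B : Set M) : Set G := {g | ∀ m, R g m → m ∈ B}
/-- A^◆ -/
def obdia (R : G → M → Prop) (A : Set G) : Set M := {m | ∃ g ∈ A, R g m}
/-- A^■ -/
def obbox (R : G → M → Prop) (A : Set G) : Set M := {m | ∀ g, R g m → g ∈ A}

def pinf (R : G → M → Prop) (p q : Set G × Set M) : Set G × Set M :=
  (p.1 ∪ q.1, obbox R (p.1 ∪ q.1))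
def psup (R : G → M → Prop) (p q : Set G × Set M) : Set G × Set M :=
  (odia R (p.2 ∩ q.2), p.2 ∩ q.2)
def pneg (R : G → M → Prop) (p : Set G × Set M) : Set G × Set M :=
  (p.1ᶜ, obbox R p.1ᶜ)
def pdneg (R : G → M → Prop) (p : Set G × Set M) : Set G × Set M :=
  (odia R p.2ᶜ, p.2ᶜ)
def ptop : Set G × Set M := (∅, ∅)
def pbot : Set G × Set M := (Set.univ, Set.univ)
/-- quasi-order on pairs: (A,B) ⊑ (C,D) iff C ⊆ A and D ⊆ B -/
def ple (p q : Set G × Set M) : Prop := q.1 ⊆ p.1 ∧ q.2 ⊆ p.2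

/-- object oriented protoconcept -/
def IsProto (R : G → M → Prop) (p : Set G × Set M) : Prop :=
  odia R (obbox R p.1) = odia R p.2
/-- object oriented semiconcept -/
def IsSemi (R : G → M → Prop) (p : Set G × Set M) : Prop :=
  obbox R p.1 = p.2 ∨ odia R p.2 = p.1

/-- continuity of the relation R -/
def ContRel [TopologicalSpace G] [TopologicalSpace M] (R : G → M → Prop) : Prop :=
  ∀ O : Set M, IsOpen O → IsOpen (odia R O) ∧ IsOpen (obox R O)
/-- continuity of the converse relation R⁻¹ -/
def ContRelInv [TopologicalSpace G] [TopologicalSpace M] (R : G → M → Prop) : Prop :=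
  ∀ O : Set G, IsOpen O → IsOpen (obdia R O) ∧ IsOpen (obbox R O)

def IsClopenProto [TopologicalSpace G] [TopologicalSpace M] (R : G → M → Prop)
    (p : Set G × Set M) : Prop :=
  IsProto R p ∧ IsClopen p.1 ∧ IsClopen p.2

def IsClopenSemi [TopologicalSpace G] [TopologicalSpace M] (R : G → M → Prop)
    (p : Set G × Set M) : Prop :=
  IsSemi R p ∧ IsClopen p.1 ∧ IsClopen p.2

def pmap {G' : Type*} {M' : Type*} (α : G → G') (β : M → M') (p : Set G' × Set M') :
    Set G × Set M := (α ⁻¹' p.1, β ⁻¹' p.2)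

end FCA

section StoneDBA

variable {D : Type u}

/-- the set of primary filters of a dBa, as a type -/
def PrimF (A : DBA D) : Type u := {F : Set D // A.IsPrimaryFilter F}
/-- the set of primary ideals of a dBa, as a type -/
def PrimI (A : DBA D) : Type u := {I : Set D // A.IsPrimaryIdeal I}
/-- F ∇ I iff F ∩ I = ∅ -/
def nabla (A : DBA D) : PrimF A → PrimI A → Prop := fun F I => F.val ∩ I.val = ∅
/-- F_x -/
def Fset (A : DBA D) (x : D) : Set (PrimF A) := {F | x ∈ F.val}
/-- I_x -/
def Iset (A : DBA D) (x : D) : Set (PrimI A) := {I | x ∈ I.val}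

/-- the topology T on primary filters, with the F_x as a subbase of closed sets -/
def filtTop (A : DBA D) : TopologicalSpace (PrimF A) :=
  TopologicalSpace.generateFrom {U | ∃ x : D, U = (Fset A x)ᶜ}
/-- the topology J on primary ideals, with the I_x as a subbase of closed sets -/
def idlTop (A : DBA D) : TopologicalSpace (PrimI A) :=
  TopologicalSpace.generateFrom {U | ∃ x : D, U = (Iset A x)ᶜ}

/-- the map h(x) := (F_{¬x}, I_x) -/
def protoEmb (A : DBA D) (x : D) : Set (PrimF A) × Set (PrimI A) :=
  (Fset A (A.neg x), Iset A x)

end StoneDBA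

section SemiPrim

variable {G : Type u} {M : Type v} [TopologicalSpace G] [TopologicalSpace M]

/-- a primary filter of the dBa of clopen object oriented semiconcepts -/
def IsSemiPrimFilter (R : G → M → Prop) (F : Set (Set G × Set M)) : Prop :=
  (∀ p ∈ F, IsClopenSemi R p) ∧
  (∀ p ∈ F, ∀ q ∈ F, pinf R p q ∈ F) ∧
  (∀ p ∈ F, ∀ z, IsClopenSemi R z → ple p z → z ∈ F) ∧
  F ≠ {p | IsClopenSemi R p} ∧
  (∀ p, IsClopenSemi R p → (p ∈ F ∨ pneg R p ∈ F))

/-- a primary ideal of the dBa of clopen object oriented semiconcepts -/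
def IsSemiPrimIdeal (R : G → M → Prop) (I : Set (Set G × Set M)) : Prop :=
  (∀ p ∈ I, IsClopenSemi R p) ∧
  (∀ p ∈ I, ∀ q ∈ I, psup R p q ∈ I) ∧
  (∀ p ∈ I, ∀ z, IsClopenSemi R z → ple z p → z ∈ I) ∧
  I ≠ {p | IsClopenSemi R p} ∧
  (∀ p, IsClopenSemi R p → (p ∈ I ∨ pdneg R p ∈ I))

def SemiPF (R : G → M → Prop) := {F : Set (Set G × Set M) // IsSemiPrimFilter R F}
def SemiPI (R : G → M → Prop) := {I : Set (Set G × Set M) // IsSemiPrimIdeal R I}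

def semiPFTop (R : G → M → Prop) : TopologicalSpace (SemiPF R) :=
  TopologicalSpace.generateFrom
    {U | ∃ p, IsClopenSemi R p ∧ U = {F : SemiPF R | p ∈ F.val}ᶜ}
def semiPITop (R : G → M → Prop) : TopologicalSpace (SemiPI R) :=
  TopologicalSpace.generateFrom
    {U | ∃ p, IsClopenSemi R p ∧ U = {I : SemiPI R | p ∈ I.val}ᶜ}

end SemiPrim

section Stmt12Aux

variable {D : Type u} (A : DBA D)

lemma infIdem (a b : D) : A.inf (A.inf a b) (A.inf a b) = A.inf a b := by
  calc A.inf (A.inf a b) (A.inf a b) = A.inf (A.inf (A.inf a b) a) b := A.ax3a _ _ _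
    _ = A.inf (A.inf a (A.inf a b)) b := by rw [A.ax2a (A.inf a b) a]
    _ = A.inf (A.inf (A.inf a a) b) b := by rw [A.ax3a]
    _ = A.inf (A.inf a b) b := by rw [A.ax1a]
    _ = A.inf a (A.inf b b) := (A.ax3a _ _ _).symm
    _ = A.inf (A.inf b b) a := A.ax2a _ _
    _ = A.inf b a := A.ax1a _ _
    _ = A.inf a b := A.ax2a _ _

lemma supIdem (a b : D) : A.sup (A.sup a b) (A.sup a b) = A.sup a b := by
  calc A.sup (A.sup a b) (A.sup a b) = A.sup (A.sup (A.sup a b) a) b := A.ax3b _ _ _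
    _ = A.sup (A.sup a (A.sup a b)) b := by rw [A.ax2b (A.sup a b) a]
    _ = A.sup (A.sup (A.sup a a) b) b := by rw [A.ax3b]
    _ = A.sup (A.sup a b) b := by rw [A.ax1b]
    _ = A.sup a (A.sup b b) := (A.ax3b _ _ _).symm
    _ = A.sup (A.sup b b) a := A.ax2b _ _
    _ = A.sup b a := A.ax1b _ _
    _ = A.sup a b := A.ax2b _ _

lemma bot_le_all (z : D) : A.le A.bot z := by
  constructor
  · rw [← A.ax9a z]
    calc A.inf (A.inf z (A.neg z)) z = A.inf z (A.inf z (A.neg z)) := A.ax2a _ _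
      _ = A.inf (A.inf z z) (A.neg z) := A.ax3a _ _ _
      _ = A.inf z (A.neg z) := A.ax1a _ _
      _ = A.inf (A.inf z (A.neg z)) (A.inf z (A.neg z)) := (infIdem A _ _).symm
  · rw [← A.ax9a z, A.ax2b]
    exact A.ax5b z (A.neg z)

lemma all_le_top (z : D) : A.le z A.top := by
  constructor
  · rw [← A.ax9b z]
    exact A.ax5a z (A.dneg z)
  · rw [← A.ax9b z]
    calc A.sup z (A.sup z (A.dneg z)) = A.sup (A.sup z z) (A.dneg z) := A.ax3b _ _ _
      _ = A.sup z (A.dneg z) := A.ax1b _ _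
      _ = A.sup (A.sup z (A.dneg z)) (A.sup z (A.dneg z)) := (supIdem A _ _).symm

lemma primF_not_bot (G : PrimF A) : A.bot ∉ G.val := by
  intro hb
  apply G.2.2.1
  exact Set.eq_univ_of_forall fun z => G.2.1.2 A.bot hb z (bot_le_all A z)

lemma primF_not_both (G : PrimF A) (x : D) (hx : x ∈ G.val)
    (hnx : A.neg x ∈ G.val) : False := by
  apply primF_not_bot A G
  rw [← A.ax9a x]
  exact G.2.1.1 x hx (A.neg x) hnx

lemma primI_not_top (G : PrimI A) : A.top ∉ G.val := by
  intro hb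
  apply G.2.2.1
  exact Set.eq_univ_of_forall fun z => G.2.1.2 A.top hb z (all_le_top A z)

lemma primI_not_both (G : PrimI A) (x : D) (hx : x ∈ G.val)
    (hnx : A.dneg x ∈ G.val) : False := by
  apply primI_not_top A G
  rw [← A.ax9b x]
  exact G.2.1.1 x hx (A.dneg x) hnx

lemma Fset_compl (x : D) : (Fset A x)ᶜ = Fset A (A.neg x) := by
  ext G
  simp only [Set.mem_compl_iff, Fset, Set.mem_setOf_eq]
  constructor
  · intro hx
    rcases G.2.2.2 x with h | h
    · exact absurd h hx
    · exact h
  · intro h hx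
    exact primF_not_both A G x hx h

lemma Iset_compl (x : D) : (Iset A x)ᶜ = Iset A (A.dneg x) := by
  ext G
  simp only [Set.mem_compl_iff, Iset, Set.mem_setOf_eq]
  constructor
  · intro hx
    rcases G.2.2.2 x with h | h
    · exact absurd h hx
    · exact h
  · intro h hx
    exact primI_not_both A G x hx h

lemma neg_neg_eq (x : D) : A.neg (A.neg x) = A.inf x x := by
  rw [← A.ax4a x, A.ax8a]

lemma dneg_dneg_eq (x : D) : A.dneg (A.dneg x) = A.sup x x := by
  rw [← A.ax4b x, A.ax8b]

lemma inf_self_le (x : D) : A.le (A.inf x x) x := by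
  constructor
  · rw [A.ax1a, infIdem]
  · rw [A.ax2b, A.ax5b]

lemma le_sup_self (x : D) : A.le x (A.sup x x) := by
  constructor
  · rw [A.ax5a]
  · rw [A.ax3b, A.ax1b, supIdem]

lemma Fset_inf_self (x : D) : Fset A (A.inf x x) = Fset A x := by
  ext G
  simp only [Fset, Set.mem_setOf_eq]
  exact ⟨fun h => G.2.1.2 _ h x (inf_self_le A x),
    fun h => G.2.1.1 x h x h⟩

lemma Iset_sup_self (x : D) : Iset A (A.sup x x) = Iset A x := by
  ext G
  simp only [Iset, Set.mem_setOf_eq]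
  exact ⟨fun h => G.2.1.2 _ h x (le_sup_self A x),
    fun h => G.2.1.1 x h x h⟩

lemma isClopen_Fset (x : D) : @IsClopen (PrimF A) (filtTop A) (Fset A x) := by
  letI := filtTop A
  have hco : ∀ y : D, IsOpen (Fset A y)ᶜ := fun y =>
    TopologicalSpace.GenerateOpen.basic _ ⟨y, rfl⟩
  constructor
  · exact ⟨hco x⟩
  · have h : Fset A x = (Fset A (A.neg x))ᶜ := by
      rw [Fset_compl, neg_neg_eq, Fset_inf_self]
    rw [h]
    exact hco _

lemma isClopen_Iset (x : D) : @IsClopen (PrimI A) (idlTop A) (Iset A x) := by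
  letI := idlTop A
  have hco : ∀ y : D, IsOpen (Iset A y)ᶜ := fun y =>
    TopologicalSpace.GenerateOpen.basic _ ⟨y, rfl⟩
  constructor
  · exact ⟨hco x⟩
  · have h : Iset A x = (Iset A (A.dneg x))ᶜ := by
      rw [Iset_compl, dneg_dneg_eq, Iset_sup_self]
    rw [h]
    exact hco _

lemma compactF : @CompactSpace (PrimF A) (filtTop A) := by
  letI := filtTop A
  rw [← isCompact_univ_iff, isCompact_iff_ultrafilter_le_nhds]
  intro f _
  have hfilter : A.IsPrimaryFilter {x | Fset A x ∈ f} := by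
    refine ⟨⟨?_, ?_⟩, ?_, ?_⟩
    · intro x hx y hy
      exact Filter.mem_of_superset (Filter.inter_mem hx hy)
        (fun G hG => G.2.1.1 x hG.1 y hG.2)
    · intro x hx z hz
      exact Filter.mem_of_superset hx (fun G hG => G.2.1.2 x hG z hz)
    · intro h
      have hb : Fset A A.bot ∈ f := Set.eq_univ_iff_forall.1 h A.bot
      have he : Fset A A.bot = (∅ : Set (PrimF A)) :=
        Set.eq_empty_of_forall_notMem fun G => primF_not_bot A G
      rw [he] at hb
      exact Ultrafilter.empty_notMem hb
    · intro x
      by_cases hx : Fset A x ∈ f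
      · exact Or.inl hx
      · refine Or.inr (Filter.mem_of_superset
          (Ultrafilter.compl_mem_iff_notMem.2 hx) ?_)
        intro G hG
        rcases G.2.2.2 x with h | h
        · exact absurd h hG
        · exact h
  refine ⟨⟨_, hfilter⟩, Set.mem_univ _, ?_⟩
  erw [show (filtTop A) = TopologicalSpace.generateFrom
    {U | ∃ x : D, U = (Fset A x)ᶜ} from rfl, TopologicalSpace.nhds_generateFrom]
  refine le_iInf₂ fun s hs => ?_
  obtain ⟨hmem, x, rfl⟩ := hs
  rw [Filter.le_principal_iff]
  exact Ultrafilter.compl_mem_iff_notMem.2 hmem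

lemma compactI : @CompactSpace (PrimI A) (idlTop A) := by
  letI := idlTop A
  rw [← isCompact_univ_iff, isCompact_iff_ultrafilter_le_nhds]
  intro f _
  have hfilter : A.IsPrimaryIdeal {x | Iset A x ∈ f} := by
    refine ⟨⟨?_, ?_⟩, ?_, ?_⟩
    · intro x hx y hy
      exact Filter.mem_of_superset (Filter.inter_mem hx hy)
        (fun G hG => G.2.1.1 x hG.1 y hG.2)
    · intro x hx z hz
      exact Filter.mem_of_superset hx (fun G hG => G.2.1.2 x hG z hz)
    · intro h
      have hb : Iset A A.top ∈ f := Set.eq_univ_iff_forall.1 h A.top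
      have he : Iset A A.top = (∅ : Set (PrimI A)) :=
        Set.eq_empty_of_forall_notMem fun G => primI_not_top A G
      rw [he] at hb
      exact Ultrafilter.empty_notMem hb
    · intro x
      by_cases hx : Iset A x ∈ f
      · exact Or.inl hx
      · refine Or.inr (Filter.mem_of_superset
          (Ultrafilter.compl_mem_iff_notMem.2 hx) ?_)
        intro G hG
        rcases G.2.2.2 x with h | h
        · exact absurd h hG
        · exact h
  refine ⟨⟨_, hfilter⟩, Set.mem_univ _, ?_⟩
  erw [show (idlTop A) = TopologicalSpace.generateFrom
    {U | ∃ x : D, U = (Iset A x)ᶜ} from rfl, TopologicalSpace.nhds_generateFrom]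
  refine le_iInf₂ fun s hs => ?_
  obtain ⟨hmem, x, rfl⟩ := hs
  rw [Filter.le_principal_iff]
  exact Ultrafilter.compl_mem_iff_notMem.2 hmem

lemma sepF (F G : PrimF A) (h : F ≠ G) :
    ∃ U : Set (PrimF A), @IsClopen (PrimF A) (filtTop A) U ∧ F ∈ U ∧ G ∉ U := by
  letI := filtTop A
  have hne : F.val ≠ G.val := fun he => h (Subtype.ext he)
  by_cases hsub : F.val ⊆ G.val
  · obtain ⟨x, hxG, hxF⟩ : ∃ x, x ∈ G.val ∧ x ∉ F.val := by
      by_contra hc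
      push_neg at hc
      exact hne (Set.Subset.antisymm hsub fun x hx => hc x hx)
    exact ⟨(Fset A x)ᶜ, (isClopen_Fset A x).compl, hxF, fun hh => hh hxG⟩
  · obtain ⟨x, hxF, hxG⟩ := Set.not_subset.1 hsub
    exact ⟨Fset A x, isClopen_Fset A x, hxF, hxG⟩

lemma sepI (F G : PrimI A) (h : F ≠ G) :
    ∃ U : Set (PrimI A), @IsClopen (PrimI A) (idlTop A) U ∧ F ∈ U ∧ G ∉ U := by
  letI := idlTop A
  have hne : F.val ≠ G.val := fun he => h (Subtype.ext he)
  by_cases hsub : F.val ⊆ G.val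
  · obtain ⟨x, hxG, hxF⟩ : ∃ x, x ∈ G.val ∧ x ∉ F.val := by
      by_contra hc
      push_neg at hc
      exact hne (Set.Subset.antisymm hsub fun x hx => hc x hx)
    exact ⟨(Iset A x)ᶜ, (isClopen_Iset A x).compl, hxF, fun hh => hh hxG⟩
  · obtain ⟨x, hxF, hxG⟩ := Set.not_subset.1 hsub
    exact ⟨Iset A x, isClopen_Iset A x, hxF, hxG⟩

lemma t2F : @T2Space (PrimF A) (filtTop A) := by
  letI := filtTop A
  refine ⟨fun F G h => ?_⟩
  obtain ⟨U, hU, hF, hG⟩ := sepF A F G h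
  exact ⟨U, Uᶜ, hU.isOpen, hU.compl.isOpen, hF, hG, disjoint_compl_right⟩

lemma t2I : @T2Space (PrimI A) (idlTop A) := by
  letI := idlTop A
  refine ⟨fun F G h => ?_⟩
  obtain ⟨U, hU, hF, hG⟩ := sepI A F G h
  exact ⟨U, Uᶜ, hU.isOpen, hU.compl.isOpen, hF, hG, disjoint_compl_right⟩

end Stmt12Aux


/-- (F_pr(D),T) and (I_pr(D),J) are compact and totally disconnected
(any two distinct points are separated by a clopen set); hence Hausdorff. -/
theorem stmt12 {D : Type u} (A : DBA D) :
    @CompactSpace (PrimF A) (filtTop A) ∧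
    (∀ F G : PrimF A, F ≠ G →
      ∃ U : Set (PrimF A), @IsClopen (PrimF A) (filtTop A) U ∧ F ∈ U ∧ G ∉ U) ∧
    @T2Space (PrimF A) (filtTop A) ∧
    @CompactSpace (PrimI A) (idlTop A) ∧
    (∀ I J : PrimI A, I ≠ J →
      ∃ U : Set (PrimI A), @IsClopen (PrimI A) (idlTop A) U ∧ I ∈ U ∧ J ∉ U) ∧
    @T2Space (PrimI A) (idlTop A) :=
  ⟨compactF A, sepF A, t2F A, compactI A, sepI A, t2I A⟩
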